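/- Let T be a compact linear operator from an infinite-dimensional Banach space X into a Banach space Y. Then there exists an infinite-dimensional closed linear subspace M of X such that the restriction of T to M, viewed as a bounded linear operator from M into Y, is infinite-nuclear. -/

import Mathlib

open Filter

/-- An operator `T : X → Y` is infinite-nuclear if `T x = Σₙ uₙ(x) yₙ` for some sequences `(uₙ)`
in `X*` with `‖uₙ‖ → 0` and `(yₙ)` in `Y` with `sup_{‖v‖ ≤ 1} Σₙ |v(yₙ)| < ∞`. -/
def InfiniteNuclear {𝕜 X Y : Type*} [RCLike 𝕜]
    [NormedAddCommGroup X] [NormedSpace 𝕜 X]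
    [NormedAddCommGroup Y] [NormedSpace 𝕜 Y] (T : X →L[𝕜] Y) : Prop :=
  ∃ (u : ℕ → X →L[𝕜] 𝕜) (y : ℕ → Y),
    Tendsto (fun n => ‖u n‖) atTop (nhds 0) ∧
    (∃ C : ℝ, ∀ v : Y →L[𝕜] 𝕜, ‖v‖ ≤ 1 →
      Summable (fun n => ‖v (y n)‖) ∧ (∑' n, ‖v (y n)‖) ≤ C) ∧
    (∀ x : X, HasSum (fun n => u n x • y n) (T x))

section Aux

variable {𝕜 X Y : Type*} [RCLike 𝕜]
    [NormedAddCommGroup X] [NormedSpace 𝕜 X]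
    [NormedAddCommGroup Y] [NormedSpace 𝕜 Y]

/-- Intersecting an infinite-dimensional submodule with the kernel of a continuous linear
functional keeps it infinite-dimensional. -/
lemma aux_inf_ker (Z : Submodule 𝕜 X) (hZ : ¬ FiniteDimensional 𝕜 Z) (g : X →L[𝕜] 𝕜) :
    ¬ FiniteDimensional 𝕜 ↥(Z ⊓ LinearMap.ker (g : X →ₗ[𝕜] 𝕜)) := by
  intro hfin
  by_cases hg : ∃ z ∈ Z, g z ≠ 0
  · obtain ⟨z, hzZ, hgz⟩ := hg
    have hle : Z ≤ (Z ⊓ LinearMap.ker (g : X →ₗ[𝕜] 𝕜)) ⊔ Submodule.span 𝕜 {z} := by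
      intro w hw
      have h1 : w - (g w / g z) • z ∈ Z ⊓ LinearMap.ker (g : X →ₗ[𝕜] 𝕜) := by
        refine ⟨sub_mem hw (Submodule.smul_mem _ _ hzZ), ?_⟩
        rw [SetLike.mem_coe, LinearMap.mem_ker, map_sub, map_smul, smul_eq_mul, ContinuousLinearMap.coe_coe]
        field_simp
        ring
      have h2 : (g w / g z) • z ∈ Submodule.span 𝕜 ({z} : Set X) :=
        Submodule.smul_mem _ _ (Submodule.mem_span_singleton_self z)
      have h3 := Submodule.add_mem_sup h1 h2
      rwa [sub_add_cancel] at h3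
    exact hZ (Submodule.finiteDimensional_of_le hle)
  · push_neg at hg
    have heq : Z ⊓ LinearMap.ker (g : X →ₗ[𝕜] 𝕜) = Z := by
      rw [inf_eq_left]
      intro w hw
      exact LinearMap.mem_ker.2 (hg w hw)
    rw [heq] at hfin
    exact hZ hfin

lemma aux_inf_finset (hX : ¬ FiniteDimensional 𝕜 X) (f : ℕ → X →L[𝕜] 𝕜) (s : Finset ℕ) :
    ¬ FiniteDimensional 𝕜 ↥(s.inf fun k => LinearMap.ker (f k : X →ₗ[𝕜] 𝕜)) := by
  classical
  induction s using Finset.induction with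
  | empty =>
      rw [Finset.inf_empty]
      intro h
      exact hX ((Submodule.topEquiv : (⊤ : Submodule 𝕜 X) ≃ₗ[𝕜] X).finiteDimensional)
  | insert _ _ ha ih =>
      rw [Finset.inf_insert, inf_comm]
      exact aux_inf_ker _ ih _

/-- In an infinite-dimensional submodule one can find a unit vector whose image under a compact
operator is as small as one wishes. -/
lemma aux_small (T : X →L[𝕜] Y) (hT : IsCompactOperator T)
    (Z : Submodule 𝕜 X) (hZ : ¬ FiniteDimensional 𝕜 Z) {δ : ℝ} (hδ : 0 < δ) :
    ∃ w : X, w ∈ Z ∧ ‖w‖ = 1 ∧ ‖T w‖ ≤ δ := by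
  obtain ⟨R, z, hR1, hzR, hz⟩ :=
    exists_seq_norm_le_one_le_norm_sub (𝕜 := 𝕜) (E := ↥Z) hZ
  have hT' : IsCompactOperator (↑T : X →ₗ[𝕜] Y) := by
    rwa [ContinuousLinearMap.coe_coe]
  have hK := hT'.isCompact_closure_image_closedBall R
  have hmem : ∀ n, T ((z n : X)) ∈ closure ((↑T : X →ₗ[𝕜] Y) '' Metric.closedBall 0 R) := by
    intro n
    refine subset_closure ⟨(z n : X), ?_, rfl⟩
    simpa [Metric.mem_closedBall, dist_zero_right] using hzR n
  obtain ⟨a, -, φ, hφ, hconv⟩ := hK.tendsto_subseq hmem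
  have hcauchy : CauchySeq fun n => T ((z (φ n) : X)) := hconv.cauchySeq
  rw [Metric.cauchySeq_iff'] at hcauchy
  obtain ⟨N, hN⟩ := hcauchy δ hδ
  have hij : φ (N + 1) ≠ φ N := (hφ (Nat.lt_succ_self N)).ne'
  set i := φ (N + 1)
  set j := φ N
  have hd1 : (1 : ℝ) ≤ ‖(z i : X) - (z j : X)‖ := by
    have := hz hij
    simpa [AddSubgroupClass.coe_norm] using this
  set d : ℝ := ‖(z i : X) - (z j : X)‖ with hd
  have hdpos : 0 < d := lt_of_lt_of_le one_pos hd1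
  refine ⟨((d : 𝕜))⁻¹ • ((z i : X) - (z j : X)), ?_, ?_, ?_⟩
  · exact Z.smul_mem _ (sub_mem (z i).2 (z j).2)
  · rw [norm_smul, norm_inv, RCLike.norm_ofReal, abs_of_pos hdpos, ← hd]
    field_simp
  · have hTd : ‖T ((z i : X)) - T ((z j : X))‖ < δ := by
      have := hN (N + 1) (Nat.le_succ N)
      simpa [dist_eq_norm] using this
    rw [map_smul, norm_smul, norm_inv, RCLike.norm_ofReal, abs_of_pos hdpos, map_sub]
    calc d⁻¹ * ‖T ((z i : X)) - T ((z j : X))‖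
        ≤ 1 * ‖T ((z i : X)) - T ((z j : X))‖ := by
          apply mul_le_mul_of_nonneg_right _ (norm_nonneg _)
          rw [inv_le_one_iff₀]; right; exact hd1
      _ ≤ δ := by rw [one_mul]; exact hTd.le

/-- The key construction: a biorthogonal system `(xₙ, fₙ)` with `‖T xₙ‖ ≤ 8⁻ⁿ`,
`‖xₙ‖ = 1` and `‖fₙ‖ ≤ 2ⁿ`. -/
lemma aux_seq (T : X →L[𝕜] Y) (hT : IsCompactOperator T) (hX : ¬ FiniteDimensional 𝕜 X) :
    ∃ (x : ℕ → X) (f : ℕ → X →L[𝕜] 𝕜),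
      (∀ n, ‖x n‖ = 1) ∧ (∀ n, ‖T (x n)‖ ≤ (8 : ℝ)⁻¹ ^ n) ∧ (∀ n, ‖f n‖ ≤ 2 ^ n) ∧
      (∀ j k, f j (x k) = if j = k then 1 else 0) := by
  classical
  set Good : ℕ → (ℕ → X) → (ℕ → (X →L[𝕜] 𝕜)) → Prop := fun n x f =>
    (∀ k < n, ‖x k‖ = 1 ∧ ‖T (x k)‖ ≤ (8 : ℝ)⁻¹ ^ k ∧ ‖f k‖ ≤ 2 ^ k) ∧
    (∀ j < n, ∀ k < n, f j (x k) = if j = k then 1 else 0) with hGood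
  have step : ∀ n (x : ℕ → X) (f : ℕ → (X →L[𝕜] 𝕜)), Good n x f →
      ∃ (a : X) (g : X →L[𝕜] 𝕜), Good (n + 1) (Function.update x n a) (Function.update f n g) := by
    intro n x f hG
    obtain ⟨a, haZ, ha1, haT⟩ := aux_small T hT _ (aux_inf_finset hX f (Finset.range n))
      (δ := (8 : ℝ)⁻¹ ^ n) (by positivity)
    have haker : ∀ k, k < n → f k a = 0 := by
      intro k hk
      have hle : (Finset.range n).inf (fun k => LinearMap.ker (f k : X →ₗ[𝕜] 𝕜)) ≤ LinearMap.ker (f k : X →ₗ[𝕜] 𝕜) :=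
        Finset.inf_le (Finset.mem_range.2 hk)
      exact LinearMap.mem_ker.1 (hle haZ)
    have ha0 : a ≠ 0 := by intro h; rw [h, norm_zero] at ha1; norm_num at ha1
    obtain ⟨g0, hg0norm, hg0a⟩ := exists_dual_vector 𝕜 a (norm_ne_zero_iff.2 ha0)
    set g : X →L[𝕜] 𝕜 := g0 - ∑ k ∈ Finset.range n, (g0 (x k)) • f k with hg
    have hga : g a = 1 := by
      rw [hg]
      simp only [ContinuousLinearMap.coe_sub', Pi.sub_apply, ContinuousLinearMap.coe_sum',
        Finset.sum_apply, ContinuousLinearMap.coe_smul', Pi.smul_apply, smul_eq_mul]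
      rw [hg0a, ha1]
      have : ∀ k ∈ Finset.range n, g0 (x k) * f k a = 0 := by
        intro k hk
        rw [haker k (Finset.mem_range.1 hk), mul_zero]
      rw [Finset.sum_congr rfl this, Finset.sum_const_zero]
      norm_num
    have hgx : ∀ k, k < n → g (x k) = 0 := by
      intro k hk
      rw [hg]
      simp only [ContinuousLinearMap.coe_sub', Pi.sub_apply, ContinuousLinearMap.coe_sum',
        Finset.sum_apply, ContinuousLinearMap.coe_smul', Pi.smul_apply, smul_eq_mul]
      have : ∀ m ∈ Finset.range n, g0 (x m) * f m (x k) =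
          if m = k then g0 (x k) else 0 := by
        intro m hm
        rw [hG.2 m (Finset.mem_range.1 hm) k hk]
        by_cases h : m = k <;> simp [h]
      rw [Finset.sum_congr rfl this, Finset.sum_ite_eq' (Finset.range n) k
        (fun _ => g0 (x k)), if_pos (Finset.mem_range.2 hk)]
      exact sub_self _
    have hgnorm : ‖g‖ ≤ 2 ^ n := by
      have h1 : ‖g‖ ≤ ‖g0‖ + ‖∑ k ∈ Finset.range n, (g0 (x k)) • f k‖ := norm_sub_le _ _
      have h2 : ‖∑ k ∈ Finset.range n, (g0 (x k)) • f k‖ ≤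
          ∑ k ∈ Finset.range n, (2 : ℝ) ^ k := by
        refine (norm_sum_le _ _).trans (Finset.sum_le_sum ?_)
        intro k hk
        refine (norm_smul_le (g0 (x k)) (f k)).trans ?_
        have hk' := Finset.mem_range.1 hk
        have hgk : ‖g0 (x k)‖ ≤ 1 := by
          calc ‖g0 (x k)‖ ≤ ‖g0‖ * ‖x k‖ := g0.le_opNorm _
            _ = 1 := by rw [hg0norm, (hG.1 k hk').1, one_mul]
        calc ‖g0 (x k)‖ * ‖f k‖ ≤ 1 * ‖f k‖ :=
              mul_le_mul_of_nonneg_right hgk (norm_nonneg _)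
          _ = ‖f k‖ := one_mul _
          _ ≤ 2 ^ k := (hG.1 k hk').2.2
      have h3 : ∑ k ∈ Finset.range n, (2 : ℝ) ^ k = 2 ^ n - 1 := by
        rw [geom_sum_eq (by norm_num)]
        norm_num
      calc ‖g‖ ≤ ‖g0‖ + (2 ^ n - 1) := by
            rw [h3] at h2; exact h1.trans (add_le_add le_rfl h2)
        _ = 2 ^ n := by rw [hg0norm]; ring
    refine ⟨a, g, ?_, ?_⟩
    · intro k hk
      rcases Nat.lt_succ_iff_lt_or_eq.1 hk with h | rfl
      · rw [Function.update_of_ne h.ne, Function.update_of_ne h.ne]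
        exact hG.1 k h
      · rw [Function.update_self, Function.update_self]
        exact ⟨ha1, haT, hgnorm⟩
    · intro j hj k hk
      rcases Nat.lt_succ_iff_lt_or_eq.1 hj with hj' | rfl <;>
        rcases Nat.lt_succ_iff_lt_or_eq.1 hk with hk' | rfl
      · rw [Function.update_of_ne hj'.ne, Function.update_of_ne hk'.ne]
        exact hG.2 j hj' k hk'
      · rw [Function.update_of_ne hj'.ne, Function.update_self, if_neg hj'.ne]
        exact haker j hj'
      · rw [Function.update_self, Function.update_of_ne hk'.ne, if_neg hk'.ne']
        exact hgx k hk'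
      · rw [Function.update_self, Function.update_self, if_pos rfl]
        exact hga
  choose A G hAG using step
  have good0 : Good 0 (fun _ => 0) (fun _ => 0) :=
    ⟨fun k hk => absurd hk (Nat.not_lt_zero k), fun j hj => absurd hj (Nat.not_lt_zero j)⟩
  let F : ∀ n : ℕ, {p : (ℕ → X) × (ℕ → (X →L[𝕜] 𝕜)) // Good n p.1 p.2} :=
    Nat.rec ⟨⟨fun _ => 0, fun _ => 0⟩, good0⟩
      (fun m p => ⟨⟨Function.update p.1.1 m (A m p.1.1 p.1.2 p.2),
        Function.update p.1.2 m (G m p.1.1 p.1.2 p.2)⟩, hAG m p.1.1 p.1.2 p.2⟩)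
  have hFsucc : ∀ n, (F (n + 1)).1.1 = Function.update (F n).1.1 n (A n (F n).1.1 (F n).1.2 (F n).2)
      ∧ (F (n + 1)).1.2 = Function.update (F n).1.2 n (G n (F n).1.1 (F n).1.2 (F n).2) :=
    fun n => ⟨rfl, rfl⟩
  set x : ℕ → X := fun n => (F (n + 1)).1.1 n with hx
  set f : ℕ → (X →L[𝕜] 𝕜) := fun n => (F (n + 1)).1.2 n with hf
  have hagree : ∀ n k, k < n → (F n).1.1 k = x k ∧ (F n).1.2 k = f k := by
    intro n
    induction n with
    | zero => intro k hk; exact absurd hk (Nat.not_lt_zero k)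
    | succ m ih =>
        intro k hk
        rcases Nat.lt_succ_iff_lt_or_eq.1 hk with h | rfl
        · constructor
          · rw [(hFsucc m).1, Function.update_of_ne h.ne]
            exact (ih k h).1
          · rw [(hFsucc m).2, Function.update_of_ne h.ne]
            exact (ih k h).2
        · exact ⟨rfl, rfl⟩
  have hGn : ∀ n, Good n x f := by
    intro n
    have hG := (F n).2
    constructor
    · intro k hk
      rw [← (hagree n k hk).1, ← (hagree n k hk).2]
      exact hG.1 k hk
    · intro j hj k hk
      rw [← (hagree n j hj).2, ← (hagree n k hk).1]
      exact hG.2 j hj k hk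
  refine ⟨x, f, ?_, ?_, ?_, ?_⟩
  · exact fun n => ((hGn (n + 1)).1 n (Nat.lt_succ_self n)).1
  · exact fun n => ((hGn (n + 1)).1 n (Nat.lt_succ_self n)).2.1
  · exact fun n => ((hGn (n + 1)).1 n (Nat.lt_succ_self n)).2.2
  · intro j k
    exact (hGn (max j k + 1)).2 j (by omega) k (by omega)

end Aux

/-- If `T` is a compact operator from an infinite-dimensional Banach space `X` into a Banach
space `Y`, then there is an infinite-dimensional closed subspace `M` of `X` such that the
restriction of `T` to `M` is infinite-nuclear. -/
theorem compact_restriction_infiniteNuclear {𝕜 X Y : Type*} [RCLike 𝕜]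
    [NormedAddCommGroup X] [NormedSpace 𝕜 X] [CompleteSpace X]
    [NormedAddCommGroup Y] [NormedSpace 𝕜 Y] [CompleteSpace Y]
    (T : X →L[𝕜] Y) (hT : IsCompactOperator T) (hX : ¬ FiniteDimensional 𝕜 X) :
    ∃ M : Submodule 𝕜 X, IsClosed (M : Set X) ∧ ¬ FiniteDimensional 𝕜 M ∧
      InfiniteNuclear (T.comp M.subtypeL) := by
  classical
  obtain ⟨x, f, hx1, hxT, hfn, hbi⟩ := aux_seq T hT hX
  have hf1 : ∀ n, (1 : ℝ) ≤ ‖f n‖ := by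
    intro n
    have h := hbi n n
    rw [if_pos rfl] at h
    calc (1 : ℝ) = ‖f n (x n)‖ := by rw [h, norm_one]
      _ ≤ ‖f n‖ * ‖x n‖ := (f n).le_opNorm _
      _ = ‖f n‖ := by rw [hx1 n, mul_one]
  have hfpos : ∀ n, (0 : ℝ) < ‖f n‖ := fun n => lt_of_lt_of_le one_pos (hf1 n)
  set c : ℕ → ℝ := fun n => (2 : ℝ)⁻¹ ^ n / ‖f n‖ with hc
  have hcpos : ∀ n, 0 < c n := fun n => div_pos (by positivity) (hfpos n)
  have hcne : ∀ n, ((c n : ℝ) : 𝕜) ≠ 0 := fun n => RCLike.ofReal_ne_zero.mpr (hcpos n).ne'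
  set u' : ℕ → X →L[𝕜] 𝕜 := fun n => ((c n : ℝ) : 𝕜) • f n with hu'
  set y : ℕ → Y := fun n => (((c n : ℝ) : 𝕜))⁻¹ • T (x n) with hy
  set A : ℕ → X →L[𝕜] Y := fun n => (u' n).smulRight (y n) with hA
  have hAapply : ∀ n w, A n w = f n w • T (x n) := by
    intro n w
    simp only [hA, hu', hy, ContinuousLinearMap.smulRight_apply,
      ContinuousLinearMap.smul_apply, smul_eq_mul, smul_smul]
    congr 1
    rw [mul_comm (((c n : ℝ) : 𝕜)) (f n w), mul_assoc, mul_inv_cancel₀ (hcne n), mul_one]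
  have hu'norm : ∀ n, ‖u' n‖ = (2 : ℝ)⁻¹ ^ n := by
    intro n
    simp only [hu']
    have h := norm_smul (β := X →L[𝕜] 𝕜) (((c n : ℝ) : 𝕜)) (f n)
    rw [h, RCLike.norm_ofReal, abs_of_pos (hcpos n), hc]
    exact div_mul_cancel₀ _ (hfpos n).ne'
  have hcinv : ∀ n, (c n)⁻¹ = ‖f n‖ * 2 ^ n := by
    intro n
    rw [hc]
    rw [inv_div, div_eq_mul_inv, inv_pow, inv_inv]
  have hynorm : ∀ n, ‖y n‖ ≤ (2 : ℝ)⁻¹ ^ n := by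
    intro n
    simp only [hy]
    have h := norm_smul (β := Y) ((((c n : ℝ) : 𝕜)))⁻¹ (T (x n))
    rw [h, norm_inv, RCLike.norm_ofReal, abs_of_pos (hcpos n), hcinv n]
    calc ‖f n‖ * 2 ^ n * ‖T (x n)‖ ≤ (2 ^ n * 2 ^ n) * ((8 : ℝ)⁻¹ ^ n) := by
          refine mul_le_mul ?_ (hxT n) (norm_nonneg _) (by positivity)
          exact mul_le_mul_of_nonneg_right (hfn n) (by positivity)
      _ = (2 : ℝ)⁻¹ ^ n := by
          rw [← mul_pow, ← mul_pow]
          congr 1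
          norm_num
  have hAnorm : ∀ n, ‖A n‖ ≤ (4 : ℝ)⁻¹ ^ n := by
    intro n
    simp only [hA]
    rw [ContinuousLinearMap.norm_smulRight_apply]
    calc ‖u' n‖ * ‖y n‖ ≤ (2 : ℝ)⁻¹ ^ n * (2 : ℝ)⁻¹ ^ n :=
          mul_le_mul (le_of_eq (hu'norm n)) (hynorm n) (norm_nonneg _) (by positivity)
      _ = (4 : ℝ)⁻¹ ^ n := by
          rw [← mul_pow]
          congr 1
          norm_num
  have hgeom4 : Summable fun n => (4 : ℝ)⁻¹ ^ n :=
    summable_geometric_of_lt_one (by norm_num) (by norm_num)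
  have hgeom2 : Summable fun n => (2 : ℝ)⁻¹ ^ n :=
    summable_geometric_of_lt_one (by norm_num) (by norm_num)
  have hAsum : Summable A := Summable.of_norm_bounded hgeom4 hAnorm
  obtain ⟨S, hS⟩ := hAsum
  have hSap : ∀ w : X, HasSum (fun n => A n w) (S w) := fun w =>
    hS.mapL (ContinuousLinearMap.apply 𝕜 Y w)
  set p : Submodule 𝕜 X := Submodule.span 𝕜 (Set.range x) with hp
  set M : Submodule 𝕜 X := p.topologicalClosure with hM
  have hxM : ∀ n, x n ∈ M := fun n =>
    p.le_topologicalClosure (Submodule.subset_span ⟨n, rfl⟩)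
  have hbase : ∀ m, T (x m) = S (x m) := by
    intro m
    have h1 : HasSum (fun n => A n (x m)) (T (x m)) := by
      have h2 : ∀ n, n ≠ m → A n (x m) = 0 := by
        intro n hn
        rw [hAapply, hbi n m, if_neg hn, zero_smul]
      have h3 : HasSum (fun n => A n (x m)) (A m (x m)) :=
        hasSum_single (f := fun n => A n (x m)) m h2
      rwa [hAapply, hbi m m, if_pos rfl, one_smul] at h3
    exact h1.unique (hSap (x m))
  have hker : p ≤ LinearMap.ker ((T - S : X →L[𝕜] Y) : X →ₗ[𝕜] Y) := by
    rw [hp, Submodule.span_le]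
    rintro _ ⟨m, rfl⟩
    rw [SetLike.mem_coe, LinearMap.mem_ker]
    simp only [ContinuousLinearMap.coe_coe, ContinuousLinearMap.coe_sub', Pi.sub_apply]
    rw [sub_eq_zero]
    exact hbase m
  have hTSM : ∀ w : X, w ∈ closure (p : Set X) → T w = S w := by
    have hEq : Set.EqOn ⇑T ⇑S (p : Set X) := by
      intro w hw
      have h0 := hker hw
      rw [LinearMap.mem_ker] at h0
      have h1 : T w - S w = 0 := by simpa using h0
      exact sub_eq_zero.1 h1
    intro w hw
    exact hEq.closure T.continuous S.continuous hw
  refine ⟨M, Submodule.isClosed_topologicalClosure p, ?_, ?_⟩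
  · intro hfin
    have hli : LinearIndependent 𝕜 x := by
      rw [linearIndependent_iff']
      intro s gc hsum i hi
      have h1 := congrArg (f i) hsum
      rw [map_sum, map_zero] at h1
      have h2 : ∀ j ∈ s, f i (gc j • x j) = if i = j then gc j else 0 := by
        intro j hj
        rw [map_smul, hbi i j, smul_eq_mul]
        by_cases h : i = j <;> simp [h]
      rw [Finset.sum_congr rfl h2, Finset.sum_ite_eq s i (fun j => gc j), if_pos hi] at h1
      exact h1
    have hcomp : M.subtype ∘ (fun n => (⟨x n, hxM n⟩ : M)) = x := rfl
    have hli' : LinearIndependent 𝕜 (fun n => (⟨x n, hxM n⟩ : M)) :=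
      LinearIndependent.of_comp M.subtype (by rw [hcomp]; exact hli)
    haveI := hfin
    haveI : Finite ℕ := hli'.finite
    exact not_finite ℕ
  · refine ⟨fun n => (u' n).comp M.subtypeL, y, ?_, ?_, ?_⟩
    · have hb : ∀ n, ‖(u' n).comp M.subtypeL‖ ≤ (2 : ℝ)⁻¹ ^ n := by
        intro n
        refine ContinuousLinearMap.opNorm_le_bound _ (by positivity) ?_
        intro z
        rw [ContinuousLinearMap.comp_apply, Submodule.subtypeL_apply]
        calc ‖u' n (z : X)‖ ≤ ‖u' n‖ * ‖(z : X)‖ := (u' n).le_opNorm _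
          _ = (2 : ℝ)⁻¹ ^ n * ‖z‖ := by
              rw [hu'norm n]; rfl
      exact squeeze_zero (fun n => norm_nonneg _) hb
        (tendsto_pow_atTop_nhds_zero_of_lt_one (by norm_num) (by norm_num))
    · refine ⟨2, fun v hv => ?_⟩
      have hvy : ∀ n, ‖v (y n)‖ ≤ (2 : ℝ)⁻¹ ^ n := by
        intro n
        calc ‖v (y n)‖ ≤ ‖v‖ * ‖y n‖ := v.le_opNorm _
          _ ≤ 1 * ((2 : ℝ)⁻¹ ^ n) := mul_le_mul hv (hynorm n) (norm_nonneg _) zero_le_one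
          _ = (2 : ℝ)⁻¹ ^ n := one_mul _
      have hsum : Summable fun n => ‖v (y n)‖ :=
        Summable.of_nonneg_of_le (fun n => norm_nonneg _) hvy hgeom2
      refine ⟨hsum, ?_⟩
      calc ∑' n, ‖v (y n)‖ ≤ ∑' n, (2 : ℝ)⁻¹ ^ n := Summable.tsum_le_tsum hvy hsum hgeom2
        _ = 2 := by
            rw [tsum_geometric_of_lt_one (by norm_num) (by norm_num)]
            norm_num
    · intro z
      have heq : (fun n => ((u' n).comp M.subtypeL) z • y n) = fun n => A n (z : X) := by
        funext n
        simp only [hA, ContinuousLinearMap.smulRight_apply, ContinuousLinearMap.comp_apply,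
          Submodule.subtypeL_apply]
      have hz : (z : X) ∈ closure (p : Set X) := by
        rw [← Submodule.topologicalClosure_coe]
        exact z.2
      have h2 : (T.comp M.subtypeL) z = S (z : X) := by
        rw [ContinuousLinearMap.comp_apply, Submodule.subtypeL_apply]
        exact hTSM _ hz
      rw [heq, h2]
      exact hSap (z : X)
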